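/- Let X, Y, Z be pointed topological spaces with maps X → Y ← Z. If X is n-connected, Z is n-connected, and Y is (n+1)-connected, then the homotopy pullback of X → Y ← Z is n-connected. -/

import Mathlib

open CategoryTheory Topology unitInterval

noncomputable section

/-- The map induced by a continuous map on generalized loops. -/
def GenLoop.push {N X Y : Type*} [TopologicalSpace X] [TopologicalSpace Y] {x : X}
    (f : C(X, Y)) (p : GenLoop N X x) : GenLoop N Y (f x) :=
  ⟨f.comp p.1, fun y hy => by simp [p.2 y hy]⟩

/-- A pointed space is `n`-connected if all homotopy groups `π_k` for `0 ≤ k ≤ n`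
(including `π_0`) are trivial. -/
def NConnected (n : ℕ) (X : Type*) [TopologicalSpace X] (x : X) : Prop :=
  ∀ k : ℕ, k ≤ n → Subsingleton (HomotopyGroup (Fin k) X x)

/-- The homotopy pullback of `X → Y ← Z`: triples `(x, γ, z)` where `γ` is a path in `Y`
from the image of `x` to the image of `z`. -/
abbrev HomotopyPullback {X Y Z : Type*} [TopologicalSpace X] [TopologicalSpace Y]
    [TopologicalSpace Z] (f : C(X, Y)) (g : C(Z, Y)) : Type _ :=
  { p : X × C(unitInterval, Y) × Z // p.2.1 0 = f p.1 ∧ p.2.1 1 = g p.2.2 }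




lemma nullh {N W : Type*} [TopologicalSpace W] {w : W}
    (h : Subsingleton (HomotopyGroup N W w)) (p : GenLoop N W w) :
    GenLoop.Homotopic p GenLoop.const := by
  have h' : Subsingleton (Quotient (GenLoop.Homotopic.setoid N w)) := h
  exact Quotient.exact (@Subsingleton.elim _ h' (Quotient.mk _ p) (Quotient.mk _ GenLoop.const))

section Gam
variable {X Y Z : Type*} [TopologicalSpace X] [TopologicalSpace Y] [TopologicalSpace Z]

def sig : ℝ → I := Set.projIcc 0 1 zero_le_one

def gam {k : ℕ} (f : C(X, Y)) (g : C(Z, Y)) (A : C(I × (I^(Fin k)), X))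
    (B : C(I × (I^(Fin k)), Z)) (c : C(I^(Fin k), C(I, Y))) :
    ((I × (I^(Fin k))) × I) → Y := fun q =>
  if 3 * (q.2 : ℝ) ≤ (q.1.1 : ℝ) then f (A (sig ((q.1.1 : ℝ) - 3 * q.2), q.1.2))
  else if 3 - (q.1.1 : ℝ) ≤ 3 * (q.2 : ℝ) then
    g (B (sig (3 * (q.2 : ℝ) - 3 + q.1.1), q.1.2))
  else c q.1.2 (sig ((3 * (q.2 : ℝ) - q.1.1) / (3 - 2 * (q.1.1 : ℝ))))

lemma continuous_sig : Continuous sig := continuous_projIcc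

lemma sig_coe (t : I) : sig (t : ℝ) = t := Set.projIcc_val zero_le_one t

lemma sig_nonpos {r : ℝ} (h : r ≤ 0) : sig r = 0 := Set.projIcc_of_le_left _ h

lemma gam_continuous {k : ℕ} (f : C(X, Y)) (g : C(Z, Y)) (A : C(I × (I^(Fin k)), X))
    (B : C(I × (I^(Fin k)), Z)) (c : C(I^(Fin k), C(I, Y)))
    (hc0 : ∀ u, c u 0 = f (A (0, u))) (hc1 : ∀ u, c u 1 = g (B (0, u))) :
    Continuous (gam f g A B c) := by
  have h3 : ∀ q : (I × (I^(Fin k))) × I, (3 : ℝ) - 2 * (q.1.1 : ℝ) ≠ 0 := by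
    intro q
    have := q.1.1.2.2
    nlinarith
  apply Continuous.if_le
  · exact f.continuous.comp (A.continuous.comp ((continuous_sig.comp
      ((continuous_subtype_val.comp (continuous_fst.comp continuous_fst)).sub
        (continuous_const.mul (continuous_subtype_val.comp continuous_snd)))).prodMk
      (continuous_snd.comp continuous_fst)))
  · apply Continuous.if_le
    · exact g.continuous.comp (B.continuous.comp ((continuous_sig.comp
        (((continuous_const.mul (continuous_subtype_val.comp continuous_snd)).sub
          continuous_const).add
          (continuous_subtype_val.comp (continuous_fst.comp continuous_fst)))).prodMk
        (continuous_snd.comp continuous_fst)))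
    · exact continuous_eval.comp
        ((c.continuous.comp (continuous_snd.comp continuous_fst)).prodMk (continuous_sig.comp
          (Continuous.div
            ((continuous_const.mul (continuous_subtype_val.comp continuous_snd)).sub
              (continuous_subtype_val.comp (continuous_fst.comp continuous_fst)))
            (continuous_const.sub (continuous_const.mul
              (continuous_subtype_val.comp (continuous_fst.comp continuous_fst)))) h3)))
    · exact continuous_const.sub (continuous_subtype_val.comp (continuous_fst.comp continuous_fst))
    · exact continuous_const.mul (continuous_subtype_val.comp continuous_snd)
    · -- frontier: 3 - t = 3 s
      rintro ⟨⟨t, u⟩, s⟩ (h : (3:ℝ) - t = 3 * s)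
      have : (3 * (s:ℝ) - 3 + t) = 0 := by linarith
      rw [this]
      have hd : ((3 * (s:ℝ) - t) / (3 - 2 * t)) = 1 := by
        rw [div_eq_one_iff_eq (h3 ((t,u),s))]; linarith
      rw [hd]
      have : sig (0:ℝ) = 0 := sig_nonpos le_rfl
      rw [this]
      have h1 : sig (1:ℝ) = 1 := by
        have := sig_coe 1; simpa using this
      rw [h1, ← hc1 u]
  · exact continuous_const.mul (continuous_subtype_val.comp continuous_snd)
  · exact continuous_subtype_val.comp (continuous_fst.comp continuous_fst)
  · -- frontier: 3 s = t
    rintro ⟨⟨t, u⟩, s⟩ (h : 3 * (s:ℝ) = t)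
    have hfalse : ¬ ((3:ℝ) - t ≤ 3 * s) := by
      have ht := t.2.2
      rw [h]; intro hc; linarith
    rw [if_neg hfalse]
    have h1 : ((t:ℝ) - 3 * s) = 0 := by linarith
    have h2 : ((3 * (s:ℝ) - t) / (3 - 2 * t)) = 0 := by
      rw [div_eq_zero_iff]; left; linarith
    rw [h1, h2, sig_nonpos le_rfl, ← hc0 u]

lemma gam_start {k : ℕ} (f : C(X, Y)) (g : C(Z, Y)) (A : C(I × (I^(Fin k)), X))
    (B : C(I × (I^(Fin k)), Z)) (c : C(I^(Fin k), C(I, Y))) (t : I) (u : I^(Fin k)) :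
    gam f g A B c ((t, u), 0) = f (A (t, u)) := by
  unfold gam
  rw [if_pos (by simp [t.2.1])]
  norm_num [sig_coe]

lemma gam_end {k : ℕ} (f : C(X, Y)) (g : C(Z, Y)) (A : C(I × (I^(Fin k)), X))
    (B : C(I × (I^(Fin k)), Z)) (c : C(I^(Fin k), C(I, Y))) (t : I) (u : I^(Fin k)) :
    gam f g A B c ((t, u), 1) = g (B (t, u)) := by
  unfold gam
  have ht1 := t.2.2
  have ht0 := t.2.1
  rw [if_neg (by simp; nlinarith), if_pos (by simp; nlinarith)]
  norm_num [sig_coe]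

lemma gam_zero {k : ℕ} (f : C(X, Y)) (g : C(Z, Y)) (A : C(I × (I^(Fin k)), X))
    (B : C(I × (I^(Fin k)), Z)) (c : C(I^(Fin k), C(I, Y)))
    (hc0 : ∀ u, c u 0 = f (A (0, u))) (hc1 : ∀ u, c u 1 = g (B (0, u)))
    (u : I^(Fin k)) (s : I) :
    gam f g A B c ((0, u), s) = c u s := by
  have hs0 := s.2.1
  have hs1 := s.2.2
  unfold gam
  dsimp only
  split_ifs with h1 h2
  · have hs : s = 0 := Subtype.ext (show (s:ℝ) = 0 by norm_num at h1; linarith)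
    subst hs
    rw [hc0 u]
    norm_num [sig_nonpos le_rfl]
  · have hs : s = 1 := Subtype.ext (show (s:ℝ) = 1 by norm_num at h2; linarith)
    subst hs
    rw [hc1 u]
    norm_num [sig_nonpos le_rfl]
  · have harg : ((3 * (s:ℝ) - ((0:I):ℝ)) / (3 - 2 * ((0:I):ℝ))) = (s:ℝ) := by norm_num
    rw [harg, sig_coe]

lemma gam_boundary {k : ℕ} (f : C(X, Y)) (g : C(Z, Y)) (A : C(I × (I^(Fin k)), X))
    (B : C(I × (I^(Fin k)), Z)) (c : C(I^(Fin k), C(I, Y))) {x₀ : X} {z₀ : Z}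
    (hbase : f x₀ = g z₀) {u : I^(Fin k)}
    (hA : ∀ t', A (t', u) = x₀) (hB : ∀ t', B (t', u) = z₀)
    (hcu : ∀ r, c u r = f x₀) (t s : I) :
    gam f g A B c ((t, u), s) = f x₀ := by
  unfold gam
  split_ifs with h1 h2
  · rw [hA]
  · rw [hB, ← hbase]
  · rw [hcu]

end Gam

section Key
variable {X Y Z : Type*} [TopologicalSpace X] [TopologicalSpace Y] [TopologicalSpace Z]

lemma key (f : C(X, Y)) (g : C(Z, Y)) (x₀ : X) (z₀ : Z)
    (hbase : f x₀ = g z₀) (hb2 : (ContinuousMap.const I (f x₀)) 1 = g z₀) (k : ℕ)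
    (hX : Subsingleton (HomotopyGroup (Fin k) X x₀))
    (hZ : Subsingleton (HomotopyGroup (Fin k) Z z₀))
    (hY : Subsingleton (HomotopyGroup (Fin (k + 1)) Y (f x₀)))
    (L : GenLoop (Fin k) (HomotopyPullback f g)
      ⟨(x₀, ContinuousMap.const _ (f x₀), z₀), rfl, hb2⟩) :
    GenLoop.Homotopic L GenLoop.const := by
  let P := HomotopyPullback f g
  let pt : P := ⟨(x₀, ContinuousMap.const _ (f x₀), z₀), rfl, hb2⟩
  -- projections
  let pX : C(P, X) := ⟨fun p => p.1.1, continuous_fst.comp continuous_subtype_val⟩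
  let pZ : C(P, Z) := ⟨fun p => p.1.2.2,
    continuous_snd.comp (continuous_snd.comp continuous_subtype_val)⟩
  let pC : C(P, C(I, Y)) := ⟨fun p => p.1.2.1,
    continuous_fst.comp (continuous_snd.comp continuous_subtype_val)⟩
  let a : GenLoop (Fin k) X x₀ :=
    ⟨pX.comp L.1, fun y hy => by rw [ContinuousMap.comp_apply, L.2 y hy]; rfl⟩
  let b : GenLoop (Fin k) Z z₀ :=
    ⟨pZ.comp L.1, fun y hy => by rw [ContinuousMap.comp_apply, L.2 y hy]; rfl⟩
  let c : C(I^(Fin k), C(I, Y)) := pC.comp L.1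
  obtain ⟨A⟩ := nullh hX a
  obtain ⟨B⟩ := nullh hZ b
  let Ac : C(I × (I^(Fin k)), X) := A.toHomotopy.toContinuousMap
  let Bc : C(I × (I^(Fin k)), Z) := B.toHomotopy.toContinuousMap
  have hA0 : ∀ u, Ac (0, u) = a.1 u := fun u => A.apply_zero u
  have hB0 : ∀ u, Bc (0, u) = b.1 u := fun u => B.apply_zero u
  have hA1 : ∀ u, Ac (1, u) = x₀ := fun u => A.apply_one u
  have hB1 : ∀ u, Bc (1, u) = z₀ := fun u => B.apply_one u
  have hArel : ∀ (t : I) u, u ∈ Cube.boundary (Fin k) → Ac (t, u) = x₀ :=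
    fun t u hu => (A.eq_fst t hu).trans (a.2 u hu)
  have hBrel : ∀ (t : I) u, u ∈ Cube.boundary (Fin k) → Bc (t, u) = z₀ :=
    fun t u hu => (B.eq_fst t hu).trans (b.2 u hu)
  have hc0 : ∀ u, c u 0 = f (Ac (0, u)) := fun u => by
    rw [hA0]; exact (L.1 u).2.1
  have hc1 : ∀ u, c u 1 = g (Bc (0, u)) := fun u => by
    rw [hB0]; exact (L.1 u).2.2
  have hcu : ∀ u, u ∈ Cube.boundary (Fin k) → ∀ r, c u r = f x₀ := by
    intro u hu r
    show (L.1 u).1.2.1 r = f x₀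
    rw [L.2 u hu]
    rfl
  let Γ : C((I × (I^(Fin k))) × I, Y) := ⟨gam f g Ac Bc c, gam_continuous f g Ac Bc c hc0 hc1⟩
  have hmem0 : ∀ w : I × (I^(Fin k)), Γ.curry w 0 = f (Ac w) := fun w =>
    gam_start f g Ac Bc c w.1 w.2
  have hmem1 : ∀ w : I × (I^(Fin k)), Γ.curry w 1 = g (Bc w) := fun w =>
    gam_end f g Ac Bc c w.1 w.2
  let Φ : C(I × (I^(Fin k)), P) :=
    ⟨fun w => ⟨(Ac w, Γ.curry w, Bc w), hmem0 w, hmem1 w⟩,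
      Continuous.subtype_mk (Ac.continuous.prodMk
        ((Γ.curry.continuous).prodMk Bc.continuous)) _⟩
  have hΦbd : ∀ (t : I) u, u ∈ Cube.boundary (Fin k) → Φ (t, u) = pt := by
    intro t u hu
    apply Subtype.ext
    refine Prod.ext (hArel t u hu) (Prod.ext ?_ (hBrel t u hu))
    ext s
    exact gam_boundary f g Ac Bc c hbase (fun t' => hArel t' u hu)
      (fun t' => hBrel t' u hu) (hcu u hu) t s
  let L1 : GenLoop (Fin k) P pt :=
    ⟨Φ.comp ⟨fun u => (1, u), (continuous_const.prodMk continuous_id)⟩,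
      fun u hu => hΦbd 1 u hu⟩
  let F1 : ContinuousMap.HomotopyRel L.1 L1.1 (Cube.boundary (Fin k)) :=
  { toContinuousMap := Φ
    map_zero_left := fun u => by
      apply Subtype.ext
      refine Prod.ext (hA0 u) (Prod.ext ?_ (hB0 u))
      ext s
      exact gam_zero f g Ac Bc c hc0 hc1 u s
    map_one_left := fun u => rfl
    prop' := fun t u hu => (hΦbd t u hu).trans (L.2 u hu).symm }
  -- stage 2
  have hinit : Continuous fun y : I^(Fin (k+1)) => (Fin.init y : I^(Fin k)) :=
    continuous_pi fun i => continuous_apply (Fin.castSucc i)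
  let Dmap : C(I^(Fin (k+1)), Y) :=
    ⟨fun y => Γ ((1, Fin.init y), y (Fin.last k)),
      Γ.continuous.comp ((continuous_const.prodMk hinit).prodMk (continuous_apply _))⟩
  have hDsnoc : ∀ (u : I^(Fin k)) (s : I), Dmap (Fin.snoc u s) = Γ ((1, u), s) := by
    intro u s
    show Γ ((1, Fin.init (Fin.snoc u s : I^(Fin (k+1)))), (Fin.snoc u s : I^(Fin (k+1))) (Fin.last k)) =
      Γ ((1, u), s)
    rw [Fin.init_snoc, Fin.snoc_last]
  have hD : ∀ y ∈ Cube.boundary (Fin (k+1)), Dmap y = f x₀ := by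
    rintro y ⟨i, hi⟩
    by_cases hl : i = Fin.last k
    · subst hl
      show Γ.curry (1, Fin.init y) (y (Fin.last k)) = f x₀
      rcases hi with h0 | h0 <;> rw [h0]
      · rw [hmem0, hA1]
      · rw [hmem1, hB1, ← hbase]
    · obtain ⟨j, rfl⟩ := Fin.eq_castSucc_of_ne_last hl
      have hj : Fin.init y ∈ Cube.boundary (Fin k) := ⟨j, hi⟩
      exact gam_boundary f g Ac Bc c hbase (fun t' => hArel t' _ hj)
        (fun t' => hBrel t' _ hj) (hcu _ hj) 1 (y (Fin.last k))
  let D : GenLoop (Fin (k+1)) Y (f x₀) := ⟨Dmap, hD⟩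
  obtain ⟨G⟩ := nullh hY D
  have hsnoc : Continuous fun q : (I × (I^(Fin k))) × I =>
      (Fin.snoc q.1.2 q.2 : I^(Fin (k+1))) := by
    apply continuous_pi
    intro j
    induction j using Fin.lastCases with
    | last =>
        have h : Continuous fun q : (I × (I^(Fin k))) × I => q.2 := continuous_snd
        simpa using h
    | cast i =>
        have h : Continuous fun q : (I × (I^(Fin k))) × I => q.1.2 i :=
          (continuous_apply i).comp (continuous_snd.comp continuous_fst)
        simpa using h
  let Γ2 : C((I × (I^(Fin k))) × I, Y) :=
    ⟨fun q => G (q.1.1, Fin.snoc q.1.2 q.2),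
      G.continuous.comp ((continuous_fst.comp continuous_fst).prodMk hsnoc)⟩
  have hG0 : ∀ (t : I) u, Γ2 ((t, u), 0) = f x₀ := by
    intro t u
    have hb : (Fin.snoc u 0 : I^(Fin (k+1))) ∈ Cube.boundary (Fin (k+1)) :=
      ⟨Fin.last k, Or.inl (by simp)⟩
    show G (t, (Fin.snoc u 0 : I^(Fin (k+1)))) = f x₀
    rw [G.eq_fst t hb]
    show Dmap _ = f x₀
    rw [hDsnoc]
    show Γ.curry (1, u) 0 = f x₀
    rw [hmem0, hA1]
  have hG1 : ∀ (t : I) u, Γ2 ((t, u), 1) = g z₀ := by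
    intro t u
    have hb : (Fin.snoc u 1 : I^(Fin (k+1))) ∈ Cube.boundary (Fin (k+1)) :=
      ⟨Fin.last k, Or.inr (by simp)⟩
    show G (t, (Fin.snoc u 1 : I^(Fin (k+1)))) = g z₀
    rw [G.eq_fst t hb]
    show Dmap _ = g z₀
    rw [hDsnoc]
    show Γ.curry (1, u) 1 = g z₀
    rw [hmem1, hB1]
  have hGbd : ∀ (t : I) u, u ∈ Cube.boundary (Fin k) → ∀ s : I, Γ2 ((t, u), s) = f x₀ := by
    intro t u hu s
    obtain ⟨i, hi⟩ := hu
    have hb : (Fin.snoc u s : I^(Fin (k+1))) ∈ Cube.boundary (Fin (k+1)) :=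
      ⟨Fin.castSucc i, by rwa [Fin.snoc_castSucc]⟩
    show G (t, (Fin.snoc u s : I^(Fin (k+1)))) = f x₀
    rw [G.eq_fst t hb]
    show Dmap _ = f x₀
    rw [hDsnoc]
    exact gam_boundary f g Ac Bc c hbase (fun t' => hArel t' u ⟨i, hi⟩)
      (fun t' => hBrel t' u ⟨i, hi⟩) (hcu u ⟨i, hi⟩) 1 s
  let Ψ : C(I × (I^(Fin k)), P) :=
    ⟨fun w => ⟨(x₀, Γ2.curry w, z₀), hG0 w.1 w.2, hG1 w.1 w.2⟩,
      Continuous.subtype_mk (continuous_const.prodMk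
        ((Γ2.curry.continuous).prodMk continuous_const)) _⟩
  let F2 : ContinuousMap.HomotopyRel L1.1 (GenLoop.const (x := pt)).1 (Cube.boundary (Fin k)) :=
  { toContinuousMap := Ψ
    map_zero_left := fun u => by
      apply Subtype.ext
      refine Prod.ext (hA1 u).symm (Prod.ext ?_ (hB1 u).symm)
      ext s
      show G (0, (Fin.snoc u s : I^(Fin (k+1)))) = Γ ((1, u), s)
      rw [G.apply_zero]
      exact hDsnoc u s
    map_one_left := fun u => by
      apply Subtype.ext
      refine Prod.ext rfl (Prod.ext ?_ rfl)
      ext s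
      show G (1, (Fin.snoc u s : I^(Fin (k+1)))) = f x₀
      rw [G.apply_one]
      rfl
    prop' := fun t u hu => by
      have h1 : Ψ (t, u) = pt := by
        apply Subtype.ext
        refine Prod.ext rfl (Prod.ext ?_ rfl)
        ext s
        exact hGbd t u hu s
      show Ψ (t, u) = L1.1 u
      rw [h1]
      exact (hΦbd 1 u hu).symm }
  exact ⟨F1.trans F2⟩

end Key

/-- If `X` and `Z` are `n`-connected and `Y` is `(n+1)`-connected, the homotopy pullback of
`X → Y ← Z` is `n`-connected. -/
theorem homotopyPullback_connectivity {X Y Z : Type*} [TopologicalSpace X] [TopologicalSpace Y]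
    [TopologicalSpace Z] (f : C(X, Y)) (g : C(Z, Y)) (x₀ : X) (z₀ : Z)
    (hbase : f x₀ = g z₀) (n : ℕ)
    (hX : NConnected n X x₀) (hZ : NConnected n Z z₀)
    (hY : NConnected (n + 1) Y (f x₀)) :
    NConnected n (HomotopyPullback f g)
      ⟨(x₀, ContinuousMap.const _ (f x₀), z₀), rfl, by simpa using hbase⟩ := by
  intro k hk
  have hkey := fun (L : GenLoop (Fin k) (HomotopyPullback f g) _) => key f g x₀ z₀ hbase (by simpa using hbase) k
    (hX k hk) (hZ k hk) (hY (k + 1) (by omega)) L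
  constructor
  intro p q
  obtain ⟨a, rfl⟩ := Quotient.exists_rep p
  obtain ⟨b, rfl⟩ := Quotient.exists_rep q
  exact Quotient.sound ((hkey a).trans (hkey b).symm)
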